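/- Let (M,c) be a coloured binary matroid with ε(M) = 2·r(M), in which every colour class has at most two elements except exactly one colour class, which consists of three elements forming a 3-circuit of M. Then M has a rainbow circuit. -/

import Mathlib

open Matroid
open scoped symmDiff Classical

namespace RainbowPaper

variable {α : Type*} {κ : Type*}

/-- A circuit of a matroid: a minimal dependent set. -/
def Circuit (M : Matroid α) (C : Set α) : Prop :=
  M.Dep C ∧ ∀ D, D ⊂ C → ¬ M.Dep D

/-- The rank of a set in a matroid: the supremum of the cardinalities of its
independent subsets. -/
noncomputable def rkSet (M : Matroid α) (X : Set α) : ℕ :=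
  sSup {n | ∃ I, M.Indep I ∧ I ⊆ X ∧ I.ncard = n}

/-- The rank of a matroid. -/
noncomputable def rk (M : Matroid α) : ℕ := rkSet M M.E

/-- A matroid is simple if every subset of the ground set with at most two
elements is independent (no loops, no parallel pairs). -/
def Simple (M : Matroid α) : Prop := ∀ X ⊆ M.E, X.ncard ≤ 2 → M.Indep X

/-- A matroid is binary if it is representable over `GF(2)`. -/
def IsBinary (M : Matroid α) : Prop :=
  ∃ (n : ℕ) (φ : α → (Fin n → ZMod 2)),
    ∀ I ⊆ M.E, (M.Indep I ↔ LinearIndependent (ZMod 2) (fun e : I => φ e.1))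

/-- A matroid is regular if it is representable over every field. -/
def IsRegular (M : Matroid α) : Prop :=
  ∀ (F : Type) [Field F], ∃ (n : ℕ) (φ : α → (Fin n → F)),
    ∀ I ⊆ M.E, (M.Indep I ↔ LinearIndependent F (fun e : I => φ e.1))

/-- The signed incidence vector of an edge with given endpoints. -/
noncomputable def incVec {V : Type} (p : V × V) : V → ℚ :=
  fun v => (if v = p.1 then (1 : ℚ) else 0) - (if v = p.2 then (1 : ℚ) else 0)

/-- A matroid is graphic if it is the cycle matroid of a graph, equivalently it is
represented by the signed incidence vectors of the edges of some graph. -/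
def IsGraphic (M : Matroid α) : Prop :=
  ∃ (V : Type) (ends : α → V × V),
    ∀ I ⊆ M.E, (M.Indep I ↔ LinearIndependent ℚ (fun e : I => incVec (ends e.1)))

/-- A matroid is cographic if its dual is graphic. -/
def IsCographic (M : Matroid α) : Prop := IsGraphic M✶

/-- The colour class of the colour `s` in the coloured matroid `(M, c)`. -/
def colourClass (M : Matroid α) (c : α → κ) (s : κ) : Set α := {e ∈ M.E | c e = s}

/-- A rainbow circuit: a circuit on which the colouring is injective. -/
def RainbowCircuit (M : Matroid α) (c : α → κ) (C : Set α) : Prop :=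
  Circuit M C ∧ Set.InjOn c C

/-- A coloured matroid is circuit-achromatic if it has no rainbow circuit. -/
def CircuitAchromatic (M : Matroid α) (c : α → κ) : Prop :=
  ∀ C, Circuit M C → ¬ Set.InjOn c C

/-- The union of the first `j` colour classes in an enumeration `f` of the colours. -/
def initialUnion (M : Matroid α) (c : α → κ) {k : ℕ} (f : Fin k → κ) (j : Fin k) : Set α :=
  ⋃ i ∈ Set.Iic j, colourClass M c (f i)

/-- A colouring of a matroid is stratified if its (nonempty) colour classes can be
enumerated `X_{i_1}, …, X_{i_k}` so that each initial union
`S_j = X_{i_1} ∪ ⋯ ∪ X_{i_j}` is closed and `1 ≤ r(S_1) < r(S_2) < ⋯ < r(S_k) = r(M)`. -/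
def Stratified (M : Matroid α) (c : α → κ) : Prop :=
  ∃ (k : ℕ) (f : Fin k → κ),
    Function.Injective f ∧
    (∀ e ∈ M.E, ∃ j, c e = f j) ∧
    (∀ j, (colourClass M c (f j)).Nonempty) ∧
    (∀ j, M.closure (initialUnion M c f j) = initialUnion M c f j) ∧
    StrictMono (fun j => rkSet M (initialUnion M c f j)) ∧
    (∀ j, 1 ≤ rkSet M (initialUnion M c f j)) ∧
    (∀ j : Fin k, j.val = k - 1 → rkSet M (initialUnion M c f j) = rk M)

/-- A short rainbow circuit pair: two disjoint rainbow circuits whose sizes sum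
to at most `r(M) + 2`. -/
def SRCP (M : Matroid α) (c : α → κ) (C₁ C₂ : Set α) : Prop :=
  RainbowCircuit M c C₁ ∧ RainbowCircuit M c C₂ ∧ Disjoint C₁ C₂ ∧
    C₁.ncard + C₂.ncard ≤ rk M + 2

/-- A short rainbow circuit 4-tuple: four rainbow circuits of total size at most
`2 r(M) + 4` such that no element belongs to more than two of them. -/
def SRC4 (M : Matroid α) (c : α → κ) (C : Fin 4 → Set α) : Prop :=
  (∀ i, RainbowCircuit M c (C i)) ∧
  (∑ i, (C i).ncard) ≤ 2 * rk M + 4 ∧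
  (∀ e : α, (Finset.univ.filter (fun i => e ∈ C i)).card ≤ 2)

lemma zmod2_dep_iff {n : ℕ} (φ : α → (Fin n → ZMod 2)) (S : Finset α) :
    ¬ LinearIndependent (ZMod 2) (fun e : (S : Set α) => φ e.1) ↔
      ∃ T ⊆ S, T.Nonempty ∧ ∑ e ∈ T, φ e = 0 := by
  have hone : ∀ x : ZMod 2, x ≠ 0 → x = 1 := by decide
  rw [Fintype.not_linearIndependent_iff]
  constructor
  · rintro ⟨g, hsum, i, hi⟩
    set G : α → ZMod 2 := fun e => if h : e ∈ S then g ⟨e, by simpa using h⟩ else 0 with hG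
    have hGi : ∀ j : (S : Set α), G j.1 = g j := by
      rintro ⟨j, hj⟩
      simp only [hG]
      rw [dif_pos (by simpa using hj)]
    refine ⟨S.filter (fun e => G e ≠ 0), Finset.filter_subset _ _, ⟨i.1, ?_⟩, ?_⟩
    · simp only [Finset.mem_filter]
      exact ⟨by simpa using i.2, by rw [hGi]; exact hi⟩
    · have h1 : ∑ e ∈ S.filter (fun e => G e ≠ 0), φ e
          = ∑ e ∈ S.filter (fun e => G e ≠ 0), G e • φ e := by
        refine Finset.sum_congr rfl fun e he => ?_
        rw [hone (G e) (Finset.mem_filter.1 he).2, one_smul]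
      rw [h1, Finset.sum_filter_of_ne (fun e _ h => by
        intro h0; exact h (by rw [h0, zero_smul]))]
      calc ∑ e ∈ S, G e • φ e = ∑ j : (S : Set α), G j.1 • φ j.1 :=
            (Finset.sum_finset_coe _ _).symm
        _ = ∑ j : (S : Set α), g j • φ j.1 := by
            refine Finset.sum_congr rfl fun j _ => by rw [hGi]
        _ = 0 := hsum
  · rintro ⟨T, hTS, ⟨x, hx⟩, hsum⟩
    refine ⟨fun j => if j.1 ∈ T then 1 else 0, ?_, ⟨x, hTS hx⟩, by simp [hx]⟩
    have : ∑ j : (S : Set α), (fun e => (if e ∈ T then (1 : ZMod 2) else 0) • φ e) j.1 = 0 := by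
      rw [Finset.sum_finset_coe (f := fun e => (if e ∈ T then (1 : ZMod 2) else 0) • φ e)]
      rw [← Finset.sum_filter_of_ne (p := fun e => e ∈ T) (fun e _ h => by
        by_contra h0; exact h (by rw [if_neg h0, zero_smul]))]
      rw [Finset.filter_mem_eq_inter, Finset.inter_eq_right.2 hTS]
      rw [← hsum]
      exact Finset.sum_congr rfl fun e he => by rw [if_pos he, one_smul]
    simpa using this

lemma exists_circuit_subset (M : Matroid α) :
    ∀ n (X : Set α), X.Finite → X.ncard ≤ n → M.Dep X → ∃ C ⊆ X, Circuit M C := by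
  intro n
  induction n with
  | zero =>
    intro X hfin hle hX
    have : X = ∅ := (Set.ncard_eq_zero hfin).1 (Nat.le_zero.1 hle)
    exact absurd (this ▸ M.empty_indep) hX.1
  | succ n ih =>
    intro X hfin hle hX
    by_cases h : ∃ D, D ⊂ X ∧ M.Dep D
    · obtain ⟨D, hD, hDdep⟩ := h
      obtain ⟨C, hCD, hC⟩ := ih D (hfin.subset hD.subset)
        (by have := Set.ncard_lt_ncard hD hfin; omega) hDdep
      exact ⟨C, hCD.trans hD.subset, hC⟩
    · exact ⟨X, subset_rfl, hX, fun D hD hDdep => h ⟨D, hD, hDdep⟩⟩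

lemma ncard_le_rk (M : Matroid α) (hfin : M.E.Finite) {I : Set α} (hI : M.Indep I) :
    I.ncard ≤ rk M := by
  apply le_csSup
  · exact ⟨M.E.ncard, by
      rintro m ⟨J, hJ, hJE, rfl⟩
      exact Set.ncard_le_ncard hJE hfin⟩
  · exact ⟨I, hI, hI.subset_ground, rfl⟩


/-- a coloured binary matroid with `2 r(M)` elements in which every
colour class has at most two elements, except exactly one colour class which is a
3-circuit, has a rainbow circuit. -/
theorem rainbow_of_triangle_class (M : Matroid α) (hM : IsBinary M)
    (hfin : M.E.Finite) (hcard : M.E.ncard = 2 * rk M) (c : α → κ)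
    (s₀ : κ) (hs₀ : Circuit M (colourClass M c s₀))
    (hs₀card : (colourClass M c s₀).ncard = 3)
    (hbd : ∀ s, s ≠ s₀ → (colourClass M c s).ncard ≤ 2) :
    ∃ C, RainbowCircuit M c C := by
  classical
  by_contra hno
  push_neg at hno
  -- every rainbow subset of the ground set is independent
  have hrb : ∀ X ⊆ M.E, Set.InjOn c X → M.Indep X := by
    intro X hXE hinj
    by_contra hind
    obtain ⟨C, hCX, hC⟩ :=
      exists_circuit_subset M X.ncard X (hfin.subset hXE) le_rfl ⟨hind, hXE⟩
    exact (hno C) ⟨hC, hinj.mono hCX⟩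
  obtain ⟨n, φ, hφ⟩ := hM
  have hdep_of_sum : ∀ S : Finset α, ↑S ⊆ M.E →
      (∃ T ⊆ S, T.Nonempty ∧ ∑ e ∈ T, φ e = 0) → ¬ M.Indep ↑S := by
    intro S hSE hT hI
    exact (zmod2_dep_iff φ S).2 hT ((hφ ↑S hSE).1 hI)
  have hsum_of_dep : ∀ S : Finset α, ↑S ⊆ M.E → ¬ M.Indep ↑S →
      ∃ T ⊆ S, T.Nonempty ∧ ∑ e ∈ T, φ e = 0 := by
    intro S hSE hI
    exact (zmod2_dep_iff φ S).1 (fun h => hI ((hφ ↑S hSE).2 h))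
  set Tc := colourClass M c s₀ with hTcdef
  obtain ⟨a, b, c₀, hab, hac, hbc, hTc⟩ := Set.ncard_eq_three.1 hs₀card
  have hTE : Tc ⊆ M.E := hs₀.1.subset_ground
  have hTmem : ∀ e, e ∈ M.E → c e = s₀ → e ∈ Tc := fun e h1 h2 => ⟨h1, h2⟩
  have hmemT : ∀ e ∈ Tc, e ∈ M.E ∧ c e = s₀ := fun e he => he
  have haT : a ∈ Tc := by rw [hTc]; simp
  have hbT : b ∈ Tc := by rw [hTc]; simp
  have hcT : c₀ ∈ Tc := by rw [hTc]; simp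
  -- the triangle as a finset and its GF(2) relation
  set Tf : Finset α := {a, b, c₀} with hTf
  have hTfcoe : (Tf : Set α) = Tc := by rw [hTc]; simp [hTf]
  obtain ⟨T3, hT3sub, hT3ne, hT3sum⟩ := hsum_of_dep Tf (by rw [hTfcoe]; exact hTE)
    (by rw [hTfcoe]; exact hs₀.1.1)
  have hT3eq : T3 = Tf := by
    by_contra hne
    have hss : (T3 : Set α) ⊂ Tc := by
      rw [← hTfcoe]
      exact Finset.coe_ssubset.2 (lt_of_le_of_ne hT3sub hne)
    refine hs₀.2 ↑T3 hss ⟨?_, hss.subset.trans hTE⟩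
    exact hdep_of_sum T3 ((Finset.coe_subset.2 hT3sub).trans (by rw [hTfcoe]; exact hTE))
      ⟨T3, subset_rfl, hT3ne, hT3sum⟩
  have hsum3 : φ a + φ b + φ c₀ = 0 := by
    rw [hT3eq, hTf] at hT3sum
    rwa [Finset.sum_insert (by simp [hab, hac]), Finset.sum_insert (by simp [hbc]),
      Finset.sum_singleton, ← add_assoc] at hT3sum
  -- counting: at least r-1 colours outside s₀
  set r := rk M with hr
  have hr2 : 2 ≤ r := by
    have h3 : Tc.ncard ≤ M.E.ncard := Set.ncard_le_ncard hTE hfin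
    omega
  have hE'fin : (M.E \ Tc).Finite := hfin.diff
  set S : Finset α := hE'fin.toFinset with hS
  have hScoe : (S : Set α) = M.E \ Tc := hE'fin.coe_toFinset
  have hScard : S.card = 2 * r - 3 := by
    have hd := Set.ncard_diff hTE (hfin.subset hTE)
    rw [hs₀card, hcard] at hd
    rw [← Set.ncard_coe_finset, hScoe, hd]
  have hSmem : ∀ e ∈ S, e ∈ M.E ∧ e ∉ Tc := by
    intro e he
    have h2 : e ∈ (S : Set α) := he
    rw [hScoe] at h2; exact h2
  have hSs₀ : ∀ e ∈ S, c e ≠ s₀ := fun e he hcs =>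
    (hSmem e he).2 (hTmem e (hSmem e he).1 hcs)
  set I : Finset κ := S.image c with hI
  have hIcard : 2 * r - 3 ≤ 2 * I.card := by
    rw [← hScard]
    refine Finset.card_le_mul_card_image S 2 (fun s hs => ?_)
    have hss₀ : s ≠ s₀ := by
      obtain ⟨e, he, rfl⟩ := Finset.mem_image.1 hs
      exact hSs₀ e he
    have hsub : ((S.filter (fun e => c e = s)) : Set α) ⊆ colourClass M c s := by
      intro e he
      have h2 := Finset.mem_coe.1 he
      rw [Finset.mem_filter] at h2
      exact ⟨(hSmem e h2.1).1, h2.2⟩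
    calc (S.filter (fun e => c e = s)).card
        = ((S.filter (fun e => c e = s) : Finset α) : Set α).ncard :=
          (Set.ncard_coe_finset _).symm
      _ ≤ (colourClass M c s).ncard :=
          Set.ncard_le_ncard hsub (hfin.subset (fun e he => he.1))
      _ ≤ 2 := hbd s hss₀
  -- a transversal R of the non-s₀ colours
  have hrep : ∀ s ∈ I, ∃ e ∈ S, c e = s := fun s hs => by
    obtain ⟨e, he, rfl⟩ := Finset.mem_image.1 hs; exact ⟨e, he, rfl⟩
  set rep : κ → α := fun s => if h : ∃ e ∈ S, c e = s then h.choose else a with hrepdef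
  have hrepS : ∀ s ∈ I, rep s ∈ S ∧ c (rep s) = s := by
    intro s hs
    have h := hrep s hs
    simp only [hrepdef, dif_pos h]
    exact ⟨h.choose_spec.1, h.choose_spec.2⟩
  set R : Finset α := I.image rep with hR
  have hRS : R ⊆ S := by
    intro x hx
    obtain ⟨s, hs, rfl⟩ := Finset.mem_image.1 hx
    exact (hrepS s hs).1
  have hRcard : R.card = I.card := Finset.card_image_of_injOn (fun s hs t ht hst => by
    rw [← (hrepS s hs).2, ← (hrepS t ht).2, hst])
  have hRinj : Set.InjOn c ↑R := by
    intro x hx y hy hxy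
    obtain ⟨s, hs, rfl⟩ := Finset.mem_image.1 (Finset.mem_coe.1 hx)
    obtain ⟨t, ht, rfl⟩ := Finset.mem_image.1 (Finset.mem_coe.1 hy)
    rw [(hrepS s hs).2, (hrepS t ht).2] at hxy
    rw [hxy]
  have hRE : ∀ e ∈ R, e ∈ M.E := fun e he => (hSmem e (hRS he)).1
  have hRnotT : ∀ e ∈ R, e ∉ Tc := fun e he => (hSmem e (hRS he)).2
  have hRs₀ : ∀ e ∈ R, c e ≠ s₀ := fun e he => hSs₀ e (hRS he)
  -- inserting one triangle element keeps things rainbow, hence independent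
  have hinsE : ∀ x ∈ Tc, (↑(insert x R) : Set α) ⊆ M.E := by
    intro x hx e he
    simp only [Finset.coe_insert, Set.mem_insert_iff, Finset.mem_coe] at he
    rcases he with rfl | he
    · exact (hmemT e hx).1
    · exact hRE e he
  have hins : ∀ x ∈ Tc, M.Indep ↑(insert x R) := by
    intro x hx
    have hcx : c x = s₀ := (hmemT x hx).2
    refine hrb _ (hinsE x hx) ?_
    intro u hu v hv huv
    simp only [Finset.coe_insert, Set.mem_insert_iff, Finset.mem_coe] at hu hv
    rcases hu with rfl | hu <;> rcases hv with rfl | hv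
    · rfl
    · exact ((hRs₀ v hv) (huv.symm.trans hcx)).elim
    · exact ((hRs₀ u hu) (huv.trans hcx)).elim
    · exact hRinj (Finset.mem_coe.2 hu) (Finset.mem_coe.2 hv) huv
  have hB0 := hins a haT
  have hB1 := hins b hbT
  have hB2 := hins c₀ hcT
  -- the set {a,b} ∪ R is too big, hence dependent
  have haR : a ∉ R := fun h => hRnotT a h haT
  have hbR : b ∉ R := fun h => hRnotT b h hbT
  have hcR : c₀ ∉ R := fun h => hRnotT c₀ h hcT
  set D : Finset α := insert a (insert b R) with hD
  have hDE : (D : Set α) ⊆ M.E := by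
    intro e he
    simp only [hD, Finset.coe_insert, Set.mem_insert_iff, Finset.mem_coe] at he
    rcases he with rfl | rfl | he
    · exact haT.1
    · exact hbT.1
    · exact hRE e he
  have hDcard : D.card = R.card + 2 := by
    rw [hD, Finset.card_insert_of_notMem (by simp [hab, haR]),
      Finset.card_insert_of_notMem hbR]
  have hDdep : ¬ M.Indep ↑D := by
    intro hI
    have hle := ncard_le_rk M hfin hI
    rw [Set.ncard_coe_finset, hDcard] at hle
    omega
  obtain ⟨T', hT'sub, ⟨x, hx⟩, hT'sum⟩ := hsum_of_dep D hDE hDdep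
  have hT'mem : ∀ e ∈ T', e = a ∨ e = b ∨ e ∈ R := by
    intro e he
    have h2 := hT'sub he
    simp only [hD, Finset.mem_insert] at h2
    exact h2
  by_cases ha' : a ∈ T' <;> by_cases hb' : b ∈ T'
  · -- both a and b in the relation: move to c₀
    have hcT' : c₀ ∉ T' := by
      intro h
      rcases hT'mem c₀ h with h1 | h1 | h1
      · exact hac h1.symm
      · exact hbc h1.symm
      · exact hcR h1
    set T'' : Finset α := insert c₀ ((T'.erase a).erase b) with hT''
    have hT''sub : T'' ⊆ insert c₀ R := by
      intro e he
      simp only [hT'', Finset.mem_insert, Finset.mem_erase] at he ⊢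
      rcases he with rfl | ⟨heb, hea, heT⟩
      · exact Or.inl rfl
      · rcases hT'mem e heT with rfl | rfl | h
        · exact absurd rfl hea
        · exact absurd rfl heb
        · exact Or.inr h
    have hT''sum : ∑ e ∈ T'', φ e = 0 := by
      have hbe : b ∈ T'.erase a := Finset.mem_erase.2 ⟨fun h => hab h.symm, hb'⟩
      have h1 := Finset.sum_erase_add (T'.erase a) φ hbe
      have h2 := Finset.sum_erase_add T' φ ha'
      rw [hT'sum] at h2
      have h3 : ∑ e ∈ (T'.erase a).erase b, φ e + (φ b + φ a) = 0 := by
        rw [← add_assoc, h1]; exact h2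
      have hneg : ∀ v : Fin n → ZMod 2, -v = v := fun v => funext fun i => by
        have hy : ∀ y : ZMod 2, -y = y := by decide
        exact hy (v i)
      have huv : ∑ e ∈ (T'.erase a).erase b, φ e = φ b + φ a := by
        have h4 := eq_neg_of_add_eq_zero_left h3
        rwa [hneg] at h4
      rw [hT'', Finset.sum_insert (fun h =>
        hcT' (Finset.mem_of_mem_erase (Finset.mem_of_mem_erase h))), huv]
      calc φ c₀ + (φ b + φ a) = φ a + φ b + φ c₀ := by abel
        _ = 0 := hsum3
    exact hdep_of_sum (insert c₀ R) (hinsE c₀ hcT)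
      ⟨T'', hT''sub, ⟨c₀, Finset.mem_insert_self _ _⟩, hT''sum⟩ hB2
  · -- only a
    have hsub : T' ⊆ insert a R := by
      intro e he
      rcases hT'mem e he with rfl | rfl | h
      · exact Finset.mem_insert_self _ _
      · exact absurd he hb'
      · exact Finset.mem_insert_of_mem h
    exact hdep_of_sum (insert a R) (hinsE a haT) ⟨T', hsub, ⟨x, hx⟩, hT'sum⟩ hB0
  · -- only b
    have hsub : T' ⊆ insert b R := by
      intro e he
      rcases hT'mem e he with rfl | rfl | h
      · exact absurd he ha'
      · exact Finset.mem_insert_self _ _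
      · exact Finset.mem_insert_of_mem h
    exact hdep_of_sum (insert b R) (hinsE b hbT) ⟨T', hsub, ⟨x, hx⟩, hT'sum⟩ hB1
  · -- neither
    have hsub : T' ⊆ insert a R := by
      intro e he
      rcases hT'mem e he with rfl | rfl | h
      · exact absurd he ha'
      · exact absurd he hb'
      · exact Finset.mem_insert_of_mem h
    exact hdep_of_sum (insert a R) (hinsE a haT) ⟨T', hsub, ⟨x, hx⟩, hT'sum⟩ hB0

end RainbowPaper
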